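/- Let a: ℤ → ℂ be a finitely supported 1D filter and let ã be the 2D filter with ã(k₁,k₂) = a(k₁) if k₂ = 0 and 0 otherwise. For n ∈ ℕ set n₁ := ⌊(n+1)/2⌋ and n₂ := n − n₁. Then for all μ₁, μ₂ ∈ ℕ₀ and all (j,k) ∈ ℤ²: [∇_{(1,0)}^{μ₁} ∇_{(1,1)}^{μ₂} S_{ã,M_{√2}}^{n} δ](j,k) = [∇^{μ₁} S_{a,2}^{n₁} δ](j−k) · [∇^{μ₂} S_{a,2}^{n₂} δ](k). Consequently, for every 1 ≤ p ≤ ∞: ‖∇_{(1,0)}^{μ₁} ∇_{(1,1)}^{μ₂} S_{ã,M_{√2}}^{n} δ‖_{ℓ_p(ℤ²)} = ‖∇^{μ₁} S_{a,2}^{n₁} δ‖_{ℓ_p(ℤ)} · ‖∇^{μ₂} S_{a,2}^{n₂} δ‖_{ℓ_p(ℤ)}. -/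

import Mathlib

open Complex Real MeasureTheory
open scoped ENNReal

/-- The 1D subdivision operator with dilation 2: `(S_{a,2} v)(n) = 2 ∑_k v(k) a(n − 2k)`. -/
noncomputable def S1 (a : ℤ → ℂ) (v : ℤ → ℂ) : ℤ → ℂ :=
  fun n => 2 * ∑ᶠ k : ℤ, v k * a (n - 2 * k)

/-- The 2D subdivision operator with the quincunx dilation `M_{√2} = [[1,1],[1,−1]]`:
`(S_{a,M} v)(n) = 2 ∑_k v(k) a(n − Mk)`. -/
noncomputable def S2q (a : ℤ × ℤ → ℂ) (v : ℤ × ℤ → ℂ) : ℤ × ℤ → ℂ :=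
  fun n => 2 * ∑ᶠ k : ℤ × ℤ, v k * a (n.1 - (k.1 + k.2), n.2 - (k.1 - k.2))

/-- The 1D backward difference `∇u = u − u(·−1)`. -/
def diff1 (u : ℤ → ℂ) : ℤ → ℂ := fun n => u n - u (n - 1)

/-- The 2D difference operator `∇_γ u = u − u(·−γ)`. -/
def diff2 (γ : ℤ × ℤ) (u : ℤ × ℤ → ℂ) : ℤ × ℤ → ℂ := fun n => u n - u (n - γ)

/-- The 1D Dirac sequence. -/
def δ1 : ℤ → ℂ := fun k => if k = 0 then 1 else 0

/-- The 2D Dirac sequence. -/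
def δ2 : ℤ × ℤ → ℂ := fun k => if k = 0 then 1 else 0

/-- The 1D filter `a` embedded as a 2D filter by identifying `ℤ` with `ℤ × {0}`. -/
def embed2D (a : ℤ → ℂ) : ℤ × ℤ → ℂ := fun k => if k.2 = 0 then a k.1 else 0

/-- The 2D sequence `∇_{(1,0)}^{μ₁} ∇_{(1,1)}^{μ₂} S_{ã,M_{√2}}^{n} δ`. -/
noncomputable def seq2D (a : ℤ → ℂ) (n μ₁ μ₂ : ℕ) : ℤ × ℤ → ℂ :=
  (diff2 (1, 0))^[μ₁] ((diff2 (1, 1))^[μ₂] ((S2q (embed2D a))^[n] δ2))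

/-- The 1D sequence `∇^{μ} S_{a,2}^{m} δ`. -/
noncomputable def seq1D (a : ℤ → ℂ) (m μ : ℕ) : ℤ → ℂ :=
  diff1^[μ] ((S1 a)^[m] δ1)

lemma S2q_tensor (a u v : ℤ → ℂ) (j k : ℤ) :
    S2q (embed2D a) (fun p => u (p.1 - p.2) * v p.2) (j, k)
      = (S1 a v) (j - k) * u k := by
  classical
  set f : ℤ × ℤ → ℂ := fun q =>
    u (q.1 - q.2) * v q.2 * embed2D a (j - (q.1 + q.2), k - (q.1 - q.2)) with hf
  have hg : Function.Injective (fun m : ℤ => (m, m - k)) := by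
    intro x y h
    simpa using congrArg Prod.fst h
  have hsupp : Function.support f ⊆ Set.range (fun m : ℤ => (m, m - k)) := by
    rintro ⟨q1, q2⟩ hq
    simp only [Function.mem_support, hf] at hq
    refine ⟨q1, ?_⟩
    have h2 : k - (q1 - q2) = 0 := by
      by_contra h0
      exact hq (by simp [embed2D, h0])
    have hq2 : q2 = q1 - k := by omega
    subst hq2
    rfl
  have step1 : ∑ᶠ q : ℤ × ℤ, f q = ∑ᶠ m : ℤ, f (m, m - k) := by
    calc ∑ᶠ q : ℤ × ℤ, f q
        = ∑ᶠ q : ℤ × ℤ, (Set.range fun m : ℤ => (m, m - k)).indicator f q := by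
          rw [Set.indicator_eq_self.2 hsupp]
      _ = ∑ᶠ q ∈ Set.range (fun m : ℤ => (m, m - k)), f q := (finsum_mem_def _ _).symm
      _ = ∑ᶠ m : ℤ, f (m, m - k) := finsum_mem_range hg
  have step2 : ∀ m : ℤ, f (m, m - k) = u k * (v (m - k) * a (j + k - 2 * m)) := by
    intro m
    have h1 : m - (m - k) = k := by ring
    have h2 : k - (m - (m - k)) = 0 := by ring
    have h3 : j - (m + (m - k)) = j + k - 2 * m := by ring
    simp only [hf, embed2D, h1, h2, h3]
    split_ifs with hif
    · ring
    · exact absurd (by ring) hif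
  have step3 : ∑ᶠ m : ℤ, v (m - k) * a (j + k - 2 * m)
      = ∑ᶠ m : ℤ, v m * a (j - k - 2 * m) := by
    rw [← finsum_comp_equiv (Equiv.addRight k) (f := fun m => v (m - k) * a (j + k - 2 * m))]
    apply finsum_congr
    intro m
    simp only [Equiv.coe_addRight, add_sub_cancel_right]
    congr 2
    ring
  have step4 : ∑ᶠ m : ℤ, u k * (v (m - k) * a (j + k - 2 * m))
      = u k * ∑ᶠ m : ℤ, v (m - k) * a (j + k - 2 * m) := by
    rw [← smul_eq_mul, smul_finsum]
    simp [smul_eq_mul]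
  calc S2q (embed2D a) (fun p => u (p.1 - p.2) * v p.2) (j, k)
      = 2 * ∑ᶠ q : ℤ × ℤ, f q := rfl
    _ = 2 * ∑ᶠ m : ℤ, f (m, m - k) := by rw [step1]
    _ = 2 * (u k * ∑ᶠ m : ℤ, v m * a (j - k - 2 * m)) := by
        rw [finsum_congr step2, step4, step3]
    _ = (S1 a v) (j - k) * u k := by rw [S1]; ring

lemma iter_S2q (a : ℤ → ℂ) (n : ℕ) :
    (S2q (embed2D a))^[n] δ2
      = fun p : ℤ × ℤ => (S1 a)^[(n + 1) / 2] δ1 (p.1 - p.2) * (S1 a)^[n / 2] δ1 p.2 := by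
  induction n with
  | zero =>
    funext p
    rcases p with ⟨j, k⟩
    by_cases hk : k = 0 <;> by_cases hj : j = 0 <;>
      simp [δ2, δ1, Prod.ext_iff, hk, hj, sub_eq_zero]
  | succ n ih =>
    rw [Function.iterate_succ_apply', ih]
    funext p
    rcases p with ⟨j, k⟩
    rw [S2q_tensor]
    have h1 : (n + 1 + 1) / 2 = n / 2 + 1 := by omega
    have h2 : (n + 1) / 2 = (n + 1) / 2 := rfl
    rw [h1, Function.iterate_succ_apply']

lemma diff2_10_tensor (u v : ℤ → ℂ) :
    diff2 (1, 0) (fun p : ℤ × ℤ => u (p.1 - p.2) * v p.2)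
      = fun p : ℤ × ℤ => diff1 u (p.1 - p.2) * v p.2 := by
  funext p
  rcases p with ⟨j, k⟩
  simp only [diff2, diff1, Prod.mk_sub_mk, sub_zero]
  have : j - 1 - k = j - k - 1 := by ring
  rw [this]
  ring

lemma diff2_11_tensor (u v : ℤ → ℂ) :
    diff2 (1, 1) (fun p : ℤ × ℤ => u (p.1 - p.2) * v p.2)
      = fun p : ℤ × ℤ => u (p.1 - p.2) * diff1 v p.2 := by
  funext p
  rcases p with ⟨j, k⟩
  simp only [diff2, diff1, Prod.mk_sub_mk]
  have : j - 1 - (k - 1) = j - k := by ring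
  rw [this]
  ring

lemma diff2_11_iter_tensor (u v : ℤ → ℂ) (μ : ℕ) :
    (diff2 (1, 1))^[μ] (fun p : ℤ × ℤ => u (p.1 - p.2) * v p.2)
      = fun p : ℤ × ℤ => u (p.1 - p.2) * diff1^[μ] v p.2 := by
  induction μ with
  | zero => rfl
  | succ μ ih =>
    rw [Function.iterate_succ_apply', ih, diff2_11_tensor, Function.iterate_succ_apply']

lemma diff2_10_iter_tensor (u v : ℤ → ℂ) (μ : ℕ) :
    (diff2 (1, 0))^[μ] (fun p : ℤ × ℤ => u (p.1 - p.2) * v p.2)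
      = fun p : ℤ × ℤ => diff1^[μ] u (p.1 - p.2) * v p.2 := by
  induction μ with
  | zero => rfl
  | succ μ ih =>
    rw [Function.iterate_succ_apply', ih, diff2_10_tensor, Function.iterate_succ_apply']



lemma seq2D_eq (a : ℤ → ℂ) (n μ₁ μ₂ : ℕ) :
    seq2D a n μ₁ μ₂
      = fun p : ℤ × ℤ => seq1D a ((n + 1) / 2) μ₁ (p.1 - p.2)
          * seq1D a (n - (n + 1) / 2) μ₂ p.2 := by
  have hn : n - (n + 1) / 2 = n / 2 := by omega
  rw [seq2D, iter_S2q, diff2_11_iter_tensor, diff2_10_iter_tensor, hn]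
  rfl

lemma eLpNorm_tensor (u v : ℤ → ℂ) (p : ℝ≥0∞) (hp : 1 ≤ p) :
    eLpNorm (fun q : ℤ × ℤ => u (q.1 - q.2) * v q.2) p Measure.count
      = eLpNorm u p Measure.count * eLpNorm v p Measure.count := by
  have hp0 : p ≠ 0 := by positivity
  set e : ℤ × ℤ ≃ ℤ × ℤ :=
    { toFun := fun q => (q.1 + q.2, q.2)
      invFun := fun q => (q.1 - q.2, q.2)
      left_inv := fun q => by simp
      right_inv := fun q => by simp } with he
  rcases eq_or_ne p ∞ with hptop | hptop
  · subst hptop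
    rw [eLpNorm_exponent_top, eLpNorm_exponent_top, eLpNorm_exponent_top,
      eLpNormEssSup_count, eLpNormEssSup_count, eLpNormEssSup_count]
    have : ∀ q : ℤ × ℤ, (‖u (q.1 - q.2) * v q.2‖₊ : ℝ≥0∞)
        = (fun q : ℤ × ℤ => (‖u q.1‖₊ * ‖v q.2‖₊ : ℝ≥0∞)) (e.symm q) := by
      intro q; simp [he, nnnorm_mul, ENNReal.coe_mul]
    simp_rw [enorm_eq_nnnorm]
    simp_rw [this]
    rw [e.symm.iSup_comp (g := fun q : ℤ × ℤ => (‖u q.1‖₊ * ‖v q.2‖₊ : ℝ≥0∞))]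
    rw [iSup_prod]
    simp_rw [ENNReal.mul_iSup, ENNReal.iSup_mul]
    exact iSup_comm
  · have hr : 0 < p.toReal := ENNReal.toReal_pos hp0 hptop
    rw [eLpNorm_eq_lintegral_rpow_enorm_toReal hp0 hptop,
      eLpNorm_eq_lintegral_rpow_enorm_toReal hp0 hptop,
      eLpNorm_eq_lintegral_rpow_enorm_toReal hp0 hptop,
      lintegral_count, lintegral_count, lintegral_count]
    simp_rw [enorm_eq_nnnorm]
    have key : ∑' q : ℤ × ℤ, (‖u (q.1 - q.2) * v q.2‖₊ : ℝ≥0∞) ^ p.toReal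
        = (∑' x : ℤ, (‖u x‖₊ : ℝ≥0∞) ^ p.toReal) * ∑' y : ℤ, (‖v y‖₊ : ℝ≥0∞) ^ p.toReal := by
      have h1 : ∀ q : ℤ × ℤ, (‖u (q.1 - q.2) * v q.2‖₊ : ℝ≥0∞) ^ p.toReal
          = (fun q : ℤ × ℤ => (‖u q.1‖₊ : ℝ≥0∞) ^ p.toReal * (‖v q.2‖₊ : ℝ≥0∞) ^ p.toReal)
            (e.symm q) := by
        intro q
        simp [he, nnnorm_mul, ENNReal.coe_mul,
          ENNReal.mul_rpow_of_nonneg _ _ hr.le]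
      simp_rw [h1]
      rw [e.symm.tsum_eq (f := fun q : ℤ × ℤ =>
        (‖u q.1‖₊ : ℝ≥0∞) ^ p.toReal * (‖v q.2‖₊ : ℝ≥0∞) ^ p.toReal)]
      rw [ENNReal.tsum_prod']
      simp_rw [ENNReal.tsum_mul_left, ENNReal.tsum_mul_right]
    rw [key, ENNReal.mul_rpow_of_nonneg _ _ (by positivity : (0:ℝ) ≤ 1 / p.toReal)]


/-- factorization of quincunx subdivision of the embedded 1D filter `ã`
into two 1D subdivisions, together with the resulting `ℓ_p`-norm identity, where
`n₁ = ⌊(n+1)/2⌋` and `n₂ = n − n₁`. -/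
theorem stmt_16 (a : ℤ → ℂ) (hafin : (Function.support a).Finite)
    (n : ℕ) (μ₁ μ₂ : ℕ) :
    (∀ jk : ℤ × ℤ, seq2D a n μ₁ μ₂ jk
      = seq1D a ((n + 1) / 2) μ₁ (jk.1 - jk.2) * seq1D a (n - (n + 1) / 2) μ₂ jk.2) ∧
    (∀ p : ℝ≥0∞, 1 ≤ p →
      eLpNorm (seq2D a n μ₁ μ₂) p MeasureTheory.Measure.count
        = eLpNorm (seq1D a ((n + 1) / 2) μ₁) p MeasureTheory.Measure.count
            * eLpNorm (seq1D a (n - (n + 1) / 2) μ₂) p MeasureTheory.Measure.count) := by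
  constructor
  · intro jk
    rw [seq2D_eq]
  · intro p hp
    rw [seq2D_eq]
    exact eLpNorm_tensor _ _ p hp
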